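/- Let f̃ ∈ H*_T(G̃, s) and define p : S_n → ℂ[t_1,...,t_n] by (t_{w(d+1)} − t_{w(d)})·p(w) = f̃(w) − f̃(°w). Then p ∈ H*_T(G_-), i.e. p(w) ≡ p(w(i,j)) mod (t_{w(i)} − t_{w(j)}) for all j < i ≤ h_-(j), and moreover p(w) ≡ p(wτ) mod (t_{w(d+1)} − t_{w(d)}) for all w ∈ S_n. -/

import Mathlib

open MvPolynomial

lemma prime_X_sub_X {n : ℕ} {a b : Fin n} (hab : a ≠ b) :
    Prime (X a - X b : MvPolynomial (Fin n) ℂ) := by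
  cases n with
  | zero => exact a.elim0
  | succ k =>
    let E := (renameEquiv ℂ (Equiv.swap a 0)).trans (finSuccEquiv ℂ k)
    rw [← MulEquiv.prime_iff E.toMulEquiv]
    have hc : Equiv.swap a 0 b ≠ 0 := by
      intro h
      exact hab ((Equiv.swap a 0).injective (h.trans (Equiv.swap_apply_left a 0).symm)).symm
    obtain ⟨c', hc'⟩ := Fin.exists_succ_eq.mpr hc
    have : E.toMulEquiv (X a - X b) = Polynomial.X - Polynomial.C (X c') := by
      show E (X a - X b) = _
      rw [map_sub]
      simp only [E, AlgEquiv.trans_apply, renameEquiv_apply, rename_X]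
      rw [Equiv.swap_apply_left, ← hc', finSuccEquiv_X_zero, finSuccEquiv_X_succ]
    rw [this]
    exact Polynomial.prime_X_sub_C _

lemma not_dvd_aux {n : ℕ} {a b u v : Fin n} (huv : u ≠ v)
    (h1 : ¬(u = a ∧ v = b)) (h2 : ¬(u = b ∧ v = a)) :
    ¬ (X a - X b : MvPolynomial (Fin n) ℂ) ∣ (X u - X v) := by
  obtain ⟨k, hkuv, hka, hkb⟩ : ∃ k, (k = u ∨ k = v) ∧ k ≠ a ∧ k ≠ b := by
    by_cases hua : u = a
    · exact ⟨v, Or.inr rfl, fun h => huv (hua.trans h.symm), fun h => h1 ⟨hua, h⟩⟩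
    · by_cases hub : u = b
      · exact ⟨v, Or.inr rfl, fun h => h2 ⟨hub, h⟩, fun h => huv (hub.trans h.symm)⟩
      · exact ⟨u, Or.inl rfl, hua, hub⟩
  rintro ⟨q, hq⟩
  have := congrArg (eval (fun x => if x = k then (1:ℂ) else 0)) hq
  simp only [map_sub, map_mul, eval_X, if_neg (Ne.symm hka), if_neg (Ne.symm hkb)] at this
  rcases hkuv with rfl | rfl
  · simp [if_neg (fun h : v = k => huv h.symm)] at this
  · simp [if_neg (fun h : u = k => huv h)] at this


/-- The GKM graph cohomology of `X(h)` (0-based conventions): maps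
`f : Sₙ → ℂ[t₁,…,tₙ]` with `f(w) − f(w·(i,j))` divisible by `t_{w(i)} − t_{w(j)}`
for all edges `{w, w(i,j)}`, `j < i ≤ h(j)`. -/
def HTX (n : ℕ) (h : Fin n → Fin n) :
    Set (Equiv.Perm (Fin n) → MvPolynomial (Fin n) ℂ) :=
  {f | ∀ (w : Equiv.Perm (Fin n)) (i j : Fin n), j < i → i ≤ h j →
    (X (w i) - X (w j)) ∣ (f w - f (w * Equiv.swap i j))}

/-- The graph cohomology of `°G`: vertices `°w` for `w ∈ Sₙ`, edges `{°w, °w(i,j)}`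
for `j < i ≤ h₋(j)` together with `{°w, °w(d+1, d₀)}`, labeled `t_{w(i)} − t_{w(j)}`. -/
def HToG (n : ℕ) (hm : Fin n → Fin n) (d₀ dp : Fin n) :
    Set (Equiv.Perm (Fin n) → MvPolynomial (Fin n) ℂ) :=
  {f | ∀ (w : Equiv.Perm (Fin n)) (i j : Fin n), j < i →
    (i ≤ hm j ∨ (i = dp ∧ j = d₀)) →
    (X (w i) - X (w j)) ∣ (f w - f (w * Equiv.swap i j))}

/-- The graph cohomology `H*_T(G̃, s)` of the labeled graph `G̃` with sign `s`:
vertices `Sₙ ⊔ °Sₙ` (`Sum.inl w = w`, `Sum.inr w = °w`), edges of `G = G_X(h)`,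
edges of `°G`, edges `{w, °w}` labeled `t_{w(d+1)} − t_{w(d)}`, together with the
4-gon condition `f(w) − f(°w) + f(wτ) − f(°wτ) ≡ 0 mod (t_{w(d+1)} − t_{w(d)})²`,
where `τ = (d, d+1)`. -/
def HTtilde (n : ℕ) (h hm : Fin n → Fin n) (d₀ d dp : Fin n) :
    Set (Equiv.Perm (Fin n) ⊕ Equiv.Perm (Fin n) → MvPolynomial (Fin n) ℂ) :=
  {f | (∀ (w : Equiv.Perm (Fin n)) (i j : Fin n), j < i → i ≤ h j →
          (X (w i) - X (w j)) ∣ (f (Sum.inl w) - f (Sum.inl (w * Equiv.swap i j)))) ∧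
       (∀ (w : Equiv.Perm (Fin n)) (i j : Fin n), j < i →
          (i ≤ hm j ∨ (i = dp ∧ j = d₀)) →
          (X (w i) - X (w j)) ∣ (f (Sum.inr w) - f (Sum.inr (w * Equiv.swap i j)))) ∧
       (∀ w : Equiv.Perm (Fin n),
          (X (w dp) - X (w d)) ∣ (f (Sum.inl w) - f (Sum.inr w))) ∧
       (∀ w : Equiv.Perm (Fin n),
          (X (w dp) - X (w d)) ^ 2 ∣
            (f (Sum.inl w) - f (Sum.inr w)
              + f (Sum.inl (w * Equiv.swap d dp)) - f (Sum.inr (w * Equiv.swap d dp))))}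

/-- For `f̃ ∈ H*_T(G̃, s)`, the element `p` defined by
`(t_{w(d+1)} − t_{w(d)})·p(w) = f̃(w) − f̃(°w)` lies in `H*_T(G₋)`,
and moreover `p(w) ≡ p(wτ) mod (t_{w(d+1)} − t_{w(d)})` for all `w`. -/
theorem quotient_p_mem_HTX (n : ℕ) (h hm hp : Fin n → Fin n) (d₀ d dp dm : Fin n)
    (hmono : Monotone h) (hle : ∀ j, j ≤ h j)
    (hd₀d : d₀ < d) (hdp : (dp : ℕ) = (d : ℕ) + 1) (hdm : (dm : ℕ) + 1 = (d : ℕ))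
    (hcol : h d = h dp) (hinv : ∀ j, h j = d ↔ j = d₀)
    (hhm : hm = Function.update h d₀ dm) (hhp : hp = Function.update h d₀ dp)
    (ft : Equiv.Perm (Fin n) ⊕ Equiv.Perm (Fin n) → MvPolynomial (Fin n) ℂ)
    (hft : ft ∈ HTtilde n h hm d₀ d dp)
    (p : Equiv.Perm (Fin n) → MvPolynomial (Fin n) ℂ)
    (hpdef : ∀ w : Equiv.Perm (Fin n),
      (X (w dp) - X (w d)) * p w = ft (Sum.inl w) - ft (Sum.inr w)) :
    p ∈ HTX n hm ∧
    ∀ w : Equiv.Perm (Fin n),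
      (X (w dp) - X (w d)) ∣ (p w - p (w * Equiv.swap d dp)) := by
  obtain ⟨h1, h2, h3, h4⟩ := hft
  have hddp : d < dp := by rw [Fin.lt_def]; omega
  have hdne : d ≠ dp := ne_of_lt hddp
  have hmle : ∀ j, hm j ≤ h j := by
    intro j; rw [hhm]
    by_cases hj : j = d₀
    · subst hj
      rw [Function.update_self]
      have hd0 : h j = d := (hinv j).mpr rfl
      rw [hd0, Fin.le_def]; omega
    · rw [Function.update_of_ne hj]
  have key2 : ∀ w : Equiv.Perm (Fin n),
      (X (w dp) - X (w d)) ∣ (p w - p (w * Equiv.swap d dp)) := by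
    intro w
    have hLne : (X (w dp) - X (w d) : MvPolynomial (Fin n) ℂ) ≠ 0 :=
      (prime_X_sub_X (fun hh => hdne.symm (w.injective hh))).ne_zero
    have h4w := h4 w
    have e1 := hpdef w
    have e2 := hpdef (w * Equiv.swap d dp)
    simp only [Equiv.Perm.mul_apply, Equiv.swap_apply_right, Equiv.swap_apply_left] at e2
    have heq : ft (Sum.inl w) - ft (Sum.inr w)
        + ft (Sum.inl (w * Equiv.swap d dp)) - ft (Sum.inr (w * Equiv.swap d dp))
        = (X (w dp) - X (w d)) * (p w - p (w * Equiv.swap d dp)) := by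
      linear_combination -e1 - e2
    rw [heq, pow_two] at h4w
    exact (mul_dvd_mul_iff_left hLne).mp h4w
  refine ⟨fun w i j hji hij => ?_, key2⟩
  by_cases hc : i = dp ∧ j = d
  · obtain ⟨rfl, rfl⟩ := hc
    rw [Equiv.swap_comm]
    exact key2 w
  · set σ := Equiv.swap i j with hσdef
    have hij' : i ≠ j := ne_of_gt hji
    have d1 := h1 w i j hji (le_trans hij (hmle j))
    have d2 := h2 w i j hji (Or.inl hij)
    have e1 := hpdef w
    have e2 := hpdef (w * σ)
    simp only [Equiv.Perm.mul_apply] at e2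
    have hσ : ∀ x : Fin n, σ x = if x = i then j else if x = j then i else x :=
      fun x => Equiv.swap_apply_def i j x
    have hE : ∃ c : MvPolynomial (Fin n) ℂ,
        (X (w dp) - X (w d)) - (X (w (σ dp)) - X (w (σ d))) = (X (w i) - X (w j)) * c := by
      by_cases hh1 : dp = i
      · have hh2 : d ≠ j := fun hdj => hc ⟨hh1.symm, hdj.symm⟩
        have hh3 : d ≠ i := fun hh => hdne (hh.trans hh1.symm)
        rw [hσ, hσ, if_pos hh1, if_neg hh3, if_neg hh2]
        exact ⟨1, by rw [hh1]; ring⟩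
      · by_cases hh2 : dp = j
        · have hh3 : d ≠ i := by intro hh; rw [hh, hh2] at hddp; exact absurd hddp (asymm hji)
          have hh4 : d ≠ j := fun hh => hdne (hh.trans hh2.symm)
          rw [hσ, hσ, if_neg hh1, if_pos hh2, if_neg hh3, if_neg hh4]
          exact ⟨-1, by rw [hh2]; ring⟩
        · by_cases hh3 : d = i
          · rw [hσ, hσ, if_neg hh1, if_neg hh2, if_pos hh3]
            exact ⟨-1, by rw [hh3]; ring⟩
          · by_cases hh4 : d = j
            · rw [hσ, hσ, if_neg hh1, if_neg hh2, if_neg hh3, if_pos hh4]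
              exact ⟨1, by rw [hh4]; ring⟩
            · rw [hσ, hσ, if_neg hh1, if_neg hh2, if_neg hh3, if_neg hh4]
              exact ⟨0, by ring⟩
    obtain ⟨c, hcc⟩ := hE
    have heq : (X (w dp) - X (w d)) * (p w - p (w * σ))
        = (ft (Sum.inl w) - ft (Sum.inl (w * σ))) - (ft (Sum.inr w) - ft (Sum.inr (w * σ)))
          - (X (w i) - X (w j)) * c * p (w * σ) := by
      linear_combination e1 - e2 - p (w * σ) * hcc
    have hdvd : (X (w i) - X (w j)) ∣ (X (w dp) - X (w d)) * (p w - p (w * σ)) := by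
      rw [heq]
      exact ((d1.sub d2).sub ((dvd_mul_right _ c).mul_right _))
    have hwij : w i ≠ w j := fun hh => hij' (w.injective hh)
    have hnd : ¬ (X (w i) - X (w j) : MvPolynomial (Fin n) ℂ) ∣ (X (w dp) - X (w d)) := by
      refine not_dvd_aux (fun hh => hdne.symm (w.injective hh)) ?_ ?_
      · rintro ⟨ha, hb⟩
        exact hc ⟨(w.injective ha).symm, (w.injective hb).symm⟩
      · rintro ⟨ha, hb⟩
        have : dp = j := w.injective ha
        have : d = i := w.injective hb
        rw [‹d = i›, ‹dp = j›] at hddp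
        exact absurd hddp (asymm hji)
    exact ((prime_X_sub_X hwij).dvd_or_dvd hdvd).resolve_left hnd
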